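/- Let X be a zero-dimensional metric space. If X is not separable, then there exists an embedding of the compact group (ℤ/2)^{ω₁} into C_k(X, 2) (compact-open topology) as a topological subgroup, and consequently C_k(X,2) does not have countable tightness. -/

import Mathlib

open Topology Set

/-- A topological space has countable tightness if every point in the closure of a set lies
in the closure of a countable subset. -/
def CountableTightness (Y : Type*) [TopologicalSpace Y] : Prop :=
  ∀ (A : Set Y) (y : Y), y ∈ closure A → ∃ B ⊆ A, B.Countable ∧ y ∈ closure B

/-- In a nonseparable metric space there is an uncountable uniformly separated set. -/
lemma exists_uncountable_separated {X : Type*} [MetricSpace X]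
    (hsep : ¬ TopologicalSpace.SeparableSpace X) :
    ∃ ε : ℝ, 0 < ε ∧ ∃ S : Set X, ¬ S.Countable ∧
      S.Pairwise fun a b => ε ≤ dist a b := by
  by_contra h
  push_neg at h
  have h' : ∀ ε : ℝ, 0 < ε → ∀ S : Set X,
      (S.Pairwise fun a b => ε ≤ dist a b) → S.Countable := by
    intro ε hε S hS
    by_contra hc
    exact (h ε hε S hc) hS
  -- maximal separated sets exist by Zorn
  have zorn : ∀ ε : ℝ, ∃ S,
      Maximal (· ∈ {S : Set X | S.Pairwise fun a b => ε ≤ dist a b}) S := by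
    intro ε
    apply zorn_subset
    intro c hc hchain
    refine ⟨⋃₀ c, ?_, fun s hs => subset_sUnion_of_mem hs⟩
    intro a ha b hb hab
    obtain ⟨s, hs, has⟩ := ha
    obtain ⟨t, ht, hbt⟩ := hb
    rcases hchain.total hs ht with hst | hts
    · exact hc ht (hst has) hbt hab
    · exact hc hs has (hts hbt) hab
  choose S hS using zorn
  -- each maximal set is (ε)-dense
  have hdense : ∀ ε : ℝ, 0 < ε → ∀ y : X, ∃ x ∈ S ε, dist y x < ε := by
    intro ε hε y
    by_contra hy
    push_neg at hy
    have hyn : y ∉ S ε := by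
      intro hmem
      have := hy y hmem
      simp at this
      linarith
    have hins : (insert y (S ε)).Pairwise fun a b => ε ≤ dist a b := by
      refine (hS ε).1.insert fun b hb hne => ⟨hy b hb, ?_⟩
      rw [dist_comm]; exact hy b hb
    have hsub := (hS ε).2 hins (subset_insert y (S ε))
    exact hyn (hsub (mem_insert y (S ε)))
  -- hence the union over ε = 1/(n+1) is a countable dense set
  refine hsep ⟨⟨⋃ n : ℕ, S (1 / (n + 1)), ?_, ?_⟩⟩
  · refine countable_iUnion fun n => ?_
    exact h' _ (by positivity) _ (hS _).1
  · rw [dense_iff_closure_eq, eq_univ_iff_forall]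
    intro y
    rw [Metric.mem_closure_iff]
    intro r hr
    obtain ⟨n, hn⟩ := exists_nat_one_div_lt hr
    obtain ⟨x, hx, hxy⟩ := hdense (1 / (n + 1)) (by positivity) y
    exact ⟨x, mem_iUnion.2 ⟨n, hx⟩, hxy.trans (by exact_mod_cast hn)⟩

theorem statement15 {X : Type*} [MetricSpace X]
    (hzd : TopologicalSpace.IsTopologicalBasis {s : Set X | IsClopen s})
    (hsep : ¬ TopologicalSpace.SeparableSpace X) :
    (∃ e : ((Cardinal.aleph 1).out → ZMod 2) →+ C(X, ZMod 2), Topology.IsEmbedding ⇑e) ∧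
      ¬ CountableTightness C(X, ZMod 2) := by
  classical
  set ι := (Cardinal.aleph 1).out with hι
  have hmk : Cardinal.mk ι = Cardinal.aleph 1 := Cardinal.mk_out _
  obtain ⟨ε, hε, S, hSc, hSsep⟩ := exists_uncountable_separated hsep
  -- an ω₁-indexed separated family of points
  have hcard : Nonempty (ι ↪ ↥S) := by
    rw [← Cardinal.lift_mk_le', hmk, Cardinal.lift_aleph, Ordinal.lift_one,
      Cardinal.aleph_one_le_lift, ← Cardinal.succ_aleph0, Order.succ_le_iff, lt_iff_not_ge,
      Cardinal.mk_le_aleph0_iff, Set.countable_coe_iff]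
    exact hSc
  obtain ⟨emb⟩ := hcard
  set x : ι → X := fun i => (emb i : X) with hx
  have hxsep : ∀ i j : ι, i ≠ j → ε ≤ dist (x i) (x j) := by
    intro i j hij
    exact hSsep (emb i).2 (emb j).2 (fun hxy => hij (emb.injective (Subtype.ext hxy)))
  -- clopen neighborhoods inside small balls
  have hA : ∀ i : ι, ∃ A : Set X, IsClopen A ∧ x i ∈ A ∧ A ⊆ Metric.ball (x i) (ε / 3) := by
    intro i
    obtain ⟨A, hA, hxi, hsub⟩ := hzd.exists_subset_of_mem_open
      (show x i ∈ Metric.ball (x i) (ε / 3) from Metric.mem_ball_self (by linarith))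
      Metric.isOpen_ball
    exact ⟨A, hA, hxi, hsub⟩
  choose A hAclopen hxA hAsub using hA
  -- uniform discreteness
  have K2 : ∀ (y : X) (i j : ι) (u v : X), u ∈ A i → v ∈ A j →
      dist y u < ε / 6 → dist y v < ε / 6 → i = j := by
    intro y i j u v hu hv hyu hyv
    by_contra hij
    have h1 : dist (x i) u < ε / 3 := by
      have := hAsub i hu; rwa [Metric.mem_ball, dist_comm] at this
    have h2 : dist (x j) v < ε / 3 := by
      have := hAsub j hv; rwa [Metric.mem_ball, dist_comm] at this
    have := hxsep i j hij
    have t1 := dist_triangle (x i) y (x j)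
    have t2 := dist_triangle (x i) u y
    have t3 := dist_triangle y v (x j)
    have hyu' : dist u y < ε / 6 := by rwa [dist_comm] at hyu
    have hv' : dist v (x j) < ε / 3 := by rwa [dist_comm] at h2
    linarith
  have K1 : ∀ (y : X) (i j : ι), y ∈ A i → y ∈ A j → i = j := by
    intro y i j hi hj
    exact K2 y i j y y hi hj (by simp; linarith) (by simp; linarith)
  -- the union of the family is closed
  have hUclosed : IsClosed (⋃ i, A i) := by
    rw [← isOpen_compl_iff]
    rw [isOpen_iff_forall_mem_open]
    intro y hy
    by_cases hnear : ∃ i, ∃ b ∈ A i, dist y b < ε / 6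
    · obtain ⟨i, b, hb, hyb⟩ := hnear
      -- y is not in the closed set A i, so a small ball around y avoids A i,
      -- and within distance ε/6 only A i can be met
      have hyAi : y ∉ A i := fun h => hy (mem_iUnion.2 ⟨i, h⟩)
      refine ⟨(Metric.ball y (ε / 6)) \ A i, ?_, ?_, ?_⟩
      · intro u hu
        intro huU
        obtain ⟨j, huj⟩ := mem_iUnion.1 huU
        have : i = j := K2 y i j b u hb huj hyb (Metric.mem_ball'.1 hu.1)
        exact hu.2 (this ▸ huj)
      · exact Metric.isOpen_ball.sdiff (hAclopen i).isClosed
      · exact ⟨Metric.mem_ball_self (by linarith), hyAi⟩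
    · push_neg at hnear
      refine ⟨Metric.ball y (ε / 6), ?_, Metric.isOpen_ball, Metric.mem_ball_self (by linarith)⟩
      intro u hu huU
      obtain ⟨j, huj⟩ := mem_iUnion.1 huU
      exact absurd (Metric.mem_ball'.1 hu) (not_lt.2 (hnear j u huj))
  -- the embedding map
  set F : (ι → ZMod 2) → X → ZMod 2 :=
    fun z y => if h : ∃ i, y ∈ A i then z h.choose else 0 with hF
  have Fval : ∀ (z : ι → ZMod 2) (y : X) (i : ι), y ∈ A i → F z y = z i := by
    intro z y i hyi
    have hex : ∃ i, y ∈ A i := ⟨i, hyi⟩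
    rw [hF]
    simp only [dif_pos hex]
    exact congrArg z (K1 y _ i hex.choose_spec hyi)
  have F0 : ∀ (z : ι → ZMod 2) (y : X), (∀ i, y ∉ A i) → F z y = 0 := by
    intro z y hy
    rw [hF]
    exact dif_neg fun ⟨i, hi⟩ => hy i hi
  -- joint continuity
  have hG : Continuous (Function.uncurry F) := by
    rw [continuous_discrete_rng]
    intro b
    rw [isOpen_iff_forall_mem_open]
    rintro ⟨z, y⟩ hzy
    simp only [mem_preimage, Function.uncurry, mem_singleton_iff] at hzy
    by_cases hy : ∃ i, y ∈ A i
    · obtain ⟨i, hyi⟩ := hy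
      have hb : z i = b := by rw [← hzy]; exact (Fval z y i hyi).symm
      refine ⟨((fun w : ι → ZMod 2 => w i) ⁻¹' {b}) ×ˢ A i, ?_, ?_, ?_⟩
      · rintro ⟨w, u⟩ ⟨hw, hu⟩
        simp only [mem_preimage, mem_singleton_iff] at hw
        simp only [mem_preimage, Function.uncurry, mem_singleton_iff]
        rw [Fval w u i hu]; exact hw
      · exact (IsOpen.preimage (continuous_apply i) (isOpen_discrete {b})).prod
          (hAclopen i).isOpen
      · exact ⟨by simpa using hb, hyi⟩
    · push_neg at hy
      have hb : b = 0 := by rw [← hzy]; exact F0 z y hy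
      refine ⟨univ ×ˢ (Metric.ball y (ε / 6) \ ⋃ i, A i), ?_, ?_, ?_⟩
      · rintro ⟨w, u⟩ ⟨-, hu⟩
        simp only [mem_preimage, Function.uncurry, mem_singleton_iff]
        rw [F0 w u fun i hi => hu.2 (mem_iUnion.2 ⟨i, hi⟩), hb]
      · exact isOpen_univ.prod (Metric.isOpen_ball.sdiff hUclosed)
      · exact ⟨mem_univ _, Metric.mem_ball_self (by linarith),
          fun hmem => (let ⟨i, hi⟩ := mem_iUnion.1 hmem; hy i hi)⟩
  have hFc : ∀ z : ι → ZMod 2, Continuous (F z) := by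
    intro z
    exact hG.comp (Continuous.prodMk_right z)
  -- the additive hom
  set e : (ι → ZMod 2) →+ C(X, ZMod 2) :=
    { toFun := fun z => ⟨F z, hFc z⟩
      map_zero' := by
        ext y
        simp only [ContinuousMap.coe_mk, ContinuousMap.zero_apply]
        by_cases hy : ∃ i, y ∈ A i
        · obtain ⟨i, hi⟩ := hy; rw [Fval _ _ i hi]; rfl
        · push_neg at hy; exact F0 _ _ hy
      map_add' := by
        intro z w
        ext y
        simp only [ContinuousMap.coe_mk, ContinuousMap.add_apply]
        by_cases hy : ∃ i, y ∈ A i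
        · obtain ⟨i, hi⟩ := hy
          rw [Fval _ _ i hi, Fval _ _ i hi, Fval _ _ i hi]; rfl
        · push_neg at hy
          rw [F0 _ _ hy, F0 _ _ hy, F0 _ _ hy]; simp } with he
  have he_cont : Continuous ⇑e := by
    apply ContinuousMap.continuous_of_continuous_uncurry
    exact hG
  have hleft : Function.LeftInverse (fun g : C(X, ZMod 2) => fun i => g (x i)) ⇑e := by
    intro z
    funext i
    exact Fval z (x i) i (hxA i)
  have hr_cont : Continuous (fun g : C(X, ZMod 2) => fun i => g (x i)) :=
    continuous_pi fun i => continuous_eval_const (x i)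
  have hemb : Topology.IsEmbedding ⇑e := hleft.isEmbedding hr_cont he_cont
  refine ⟨⟨e, hemb⟩, ?_⟩
  -- the tightness part
  intro hct
  have hιunc : ¬ Countable ι := by
    rw [← Cardinal.mk_le_aleph0_iff, hmk, not_le]
    exact Cardinal.aleph0_lt_aleph_one
  set A₀ : Set (ι → ZMod 2) := {z | {i | z i ≠ 0}.Finite} with hA₀
  have h1 : (fun _ => 1 : ι → ZMod 2) ∈ closure A₀ := by
    rw [mem_closure_iff_nhds]
    intro U hU
    rw [nhds_pi] at hU
    obtain ⟨I, hIfin, t, ht, hsub⟩ := Filter.mem_pi.1 hU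
    refine ⟨fun i => if i ∈ I then 1 else 0, hsub fun i hi => ?_, ?_⟩
    · simp only [if_pos hi]
      exact mem_of_mem_nhds (ht i)
    · rw [hA₀, mem_setOf_eq]
      apply hIfin.subset
      intro i hi
      by_contra hiI
      simp [if_neg hiI] at hi
      exact hiI hi
  have hy1 : e (fun _ => 1) ∈ closure (⇑e '' A₀) :=
    (image_closure_subset_closure_image he_cont) ⟨_, h1, rfl⟩
  obtain ⟨B, hBsub, hBc, hyB⟩ := hct (⇑e '' A₀) (e (fun _ => 1)) hy1
  set Z : Set (ι → ZMod 2) := ⇑e ⁻¹' B ∩ A₀ with hZ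
  have hZc : Z.Countable := ((hBc.preimage hleft.injective).mono inter_subset_left)
  have hTc : (⋃ z ∈ Z, {i | z i ≠ 0}).Countable :=
    hZc.biUnion fun z hz => hz.2.countable
  obtain ⟨j, hj⟩ : ∃ j : ι, j ∉ ⋃ z ∈ Z, {i | z i ≠ 0} := by
    by_contra hall
    push_neg at hall
    have : (univ : Set ι).Countable := hTc.mono fun i _ => hall i
    exact hιunc (Set.countable_univ_iff.1 this)
  have hBval : ∀ g ∈ B, g (x j) = 0 := by
    intro g hg
    obtain ⟨z, hzA, rfl⟩ := hBsub hg
    have hzZ : z ∈ Z := ⟨hg, hzA⟩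
    have hzj : z j = 0 := by
      by_contra hne
      exact hj (mem_iUnion₂.2 ⟨z, hzZ, hne⟩)
    calc (e z) (x j) = F z (x j) := rfl
      _ = z j := Fval z (x j) j (hxA j)
      _ = 0 := hzj
  have hclosed : IsClosed {g : C(X, ZMod 2) | g (x j) = 0} :=
    isClosed_singleton.preimage (continuous_eval_const (x j))
  have hy0 : (e (fun _ => 1)) (x j) = 0 :=
    closure_minimal hBval hclosed hyB
  have hy1' : (e (fun _ => 1)) (x j) = 1 := by
    calc (e (fun _ => 1 : ι → ZMod 2)) (x j) = F (fun _ => 1) (x j) := rfl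
      _ = 1 := by exact Fval (fun _ => 1) (x j) j (hxA j)
  rw [hy1'] at hy0
  exact absurd hy0 (by decide)
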